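/- Fix n ≥ 1, set b = ⌊log₂ n⌋ + 2, and let t be an integer. In ℤ[X₀, …, X_{b−1}], let I be the ideal generated by Xᵢ² − (2·Xᵢ + X_{i+1}) for 0 ≤ i ≤ b−2 together with X_{b−1}². If g is a multilinear polynomial with (t + 1 + X₀)ⁿ − g ∈ I, then evaluating g at X₀ = X₁ = ⋯ = X_{b−1} = 1 gives ∑_{k=0}^{n} C(n,k)·t^{n−k}·C(2k,k), the t-th binomial transform of the central binomial coefficient sequence. -/

import Mathlib

open MvPolynomial

/-- The generators of the ideal `I`: `Xᵢ² − (2Xᵢ + X_{i+1})` for `i ≤ b-2`, and `X_{b-1}²`. -/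
noncomputable def gens (b : ℕ) : Fin b → MvPolynomial (Fin b) ℤ := fun i =>
  if h : (i : ℕ) + 1 < b then X i ^ 2 - (2 * X i + X ⟨(i : ℕ) + 1, h⟩) else X i ^ 2

section Stmt9Aux
open LaurentPolynomial

def cc (M : ℤ) (hM : 1 ≤ M) (k : ℤ) : ℤ :=
  if k < -(2*M) then
    -(cc M hM (k+4*M) + 2*cc M hM (k+3*M) + 2*cc M hM (k+M) + 3*cc M hM (k+2*M))
  else if 2*M ≤ k then
    -(cc M hM (k-4*M) + 2*cc M hM (k-3*M) + 2*cc M hM (k-M) + 3*cc M hM (k-2*M))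
  else if k = 0 then 1 else 0
termination_by ((k - (2*M - 1)).toNat + (-(2*M) - k).toNat)
decreasing_by all_goals omega

lemma cc_base (M : ℤ) (hM : 1 ≤ M) (k : ℤ) (h1 : -(2*M) ≤ k) (h2 : k < 2*M) :
    cc M hM k = if k = 0 then 1 else 0 := by
  rw [cc, if_neg (by omega), if_neg (by omega)]

lemma cc_rel (M : ℤ) (hM : 1 ≤ M) (k : ℤ) :
    cc M hM (k + 2*M) + cc M hM (k - 2*M) + 2 * cc M hM (k + M) + 2 * cc M hM (k - M)
      + 3 * cc M hM k = 0 := by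
  rcases le_or_gt 0 k with h | h
  · have e : cc M hM (k + 2*M) = -(cc M hM (k+2*M-4*M) + 2*cc M hM (k+2*M-3*M)
        + 2*cc M hM (k+2*M-M) + 3*cc M hM (k+2*M-2*M)) := by
      rw [cc, if_neg (by omega), if_pos (by omega)]
    rw [show k+2*M-4*M = k-2*M by ring, show k+2*M-3*M = k-M by ring,
      show k+2*M-M = k+M by ring, show k+2*M-2*M = k by ring] at e
    linarith
  · have e : cc M hM (k - 2*M) = -(cc M hM (k-2*M+4*M) + 2*cc M hM (k-2*M+3*M)
        + 2*cc M hM (k-2*M+M) + 3*cc M hM (k-2*M+2*M)) := by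
      rw [cc, if_pos (by omega)]
    rw [show k-2*M+4*M = k+2*M by ring, show k-2*M+3*M = k+M by ring,
      show k-2*M+M = k-M by ring, show k-2*M+2*M = k by ring] at e
    linarith

noncomputable abbrev sg (k a : ℤ) : LaurentPolynomial ℤ := AddMonoidAlgebra.single k a

noncomputable def L (M : ℤ) (hM : 1 ≤ M) : LaurentPolynomial ℤ →ₗ[ℤ] ℤ :=
  Finsupp.linearCombination ℤ (cc M hM) ∘ₗ (AddMonoidAlgebra.coeffLinearEquiv ℤ).toLinearMap

lemma L_single (M : ℤ) (hM : 1 ≤ M) (k : ℤ) (a : ℤ) :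
    L M hM (sg k a) = a * cc M hM k := by
  show Finsupp.linearCombination ℤ (cc M hM) (Finsupp.single k a) = _
  rw [Finsupp.linearCombination_single, smul_eq_mul]

noncomputable def q (M : ℤ) : LaurentPolynomial ℤ :=
  sg (2*M) 1 + sg (-(2*M)) 1 + sg M 2 + sg (-M) 2 + sg 0 3

lemma L_mul_q (M : ℤ) (hM : 1 ≤ M) (f : LaurentPolynomial ℤ) : L M hM (f * q M) = 0 := by
  induction f using AddMonoidAlgebra.induction with
  | zero => show L M hM (0 * q M) = 0; rw [zero_mul, map_zero]
  | single_add k a f hk ha ih =>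
    show L M hM ((sg k a + (show LaurentPolynomial ℤ from f)) * q M) = 0
    rw [add_mul, map_add, ih, add_zero]
    have expand : sg k a * q M
        = sg (k + 2*M) (a*1) + sg (k + -(2*M)) (a*1)
          + sg (k + M) (a*2) + sg (k + -M) (a*2)
          + sg (k + 0) (a*3) := by
      rw [q, mul_add, mul_add, mul_add, mul_add,
        AddMonoidAlgebra.single_mul_single, AddMonoidAlgebra.single_mul_single,
        AddMonoidAlgebra.single_mul_single, AddMonoidAlgebra.single_mul_single,
        AddMonoidAlgebra.single_mul_single]
    rw [expand, map_add, map_add, map_add, map_add, L_single, L_single, L_single, L_single,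
      L_single]
    simp only [← sub_eq_add_neg, add_zero]
    linear_combination a * cc_rel M hM k


lemma T_mul_T_neg (a : ℤ) : (T a * T (-a) : LaurentPolynomial ℤ) = 1 := by
  rw [← T_add, add_neg_cancel, T_zero]

lemma cheb (a : ℤ) : ((T a + T (-a) + 1)^2 : LaurentPolynomial ℤ)
    - (2*(T a + T (-a) + 1) + (T (2*a) + T (-(2*a)) + 1)) = 0 := by
  have h1 := T_mul_T_neg a
  have h2 : (T (2*a) : LaurentPolynomial ℤ) = T a * T a := by rw [← T_add, two_mul]
  have h3 : (T (-(2*a)) : LaurentPolynomial ℤ) = T (-a) * T (-a) := by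
    rw [← T_add]; ring_nf
  linear_combination 2*h1 - h2 - h3

lemma q_T (M : ℤ) : q M = T (2*M) + T (-(2*M)) + 2 * T M + 2 * T (-M) + 3 := by
  have h : ∀ k : ℤ, ∀ a : ℤ, sg k a = LaurentPolynomial.C a * T k := fun k a => single_eq_C_mul_T a k
  rw [q, h, h, h, h, h]
  have c1 : (LaurentPolynomial.C 1 : LaurentPolynomial ℤ) = 1 := map_one LaurentPolynomial.C
  have c2 : (LaurentPolynomial.C 2 : LaurentPolynomial ℤ) = 2 := by norm_num
  have c3 : (LaurentPolynomial.C 3 : LaurentPolynomial ℤ) = 3 := by norm_num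
  rw [c1, c2, c3, T_zero]
  ring

lemma qval (M : ℤ) : ((T M + T (-M) + 1)^2 : LaurentPolynomial ℤ) = q M := by
  have h1 := T_mul_T_neg M
  have h2 : (T (2*M) : LaurentPolynomial ℤ) = T M * T M := by rw [← T_add, two_mul]
  have h3 : (T (-(2*M)) : LaurentPolynomial ℤ) = T (-M) * T (-M) := by
    rw [← T_add]; ring_nf
  rw [q_T]
  linear_combination 2*h1 - h2 - h3

open MvPolynomial in
noncomputable def phi (b : ℕ) : MvPolynomial (Fin b) ℤ →ₐ[ℤ] LaurentPolynomial ℤ :=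
  MvPolynomial.aeval fun i : Fin b => T (2^(i:ℕ)) + T (-(2^(i:ℕ))) + 1

open MvPolynomial in
lemma phi_gens (b : ℕ) (i : Fin b) :
    phi b (gens b i) ∈ Ideal.span {q ((2:ℤ)^(b-1))} := by
  rw [gens]
  split
  next h =>
    have : phi b (X i ^ 2 - (2 * X i + X ⟨(i:ℕ)+1, h⟩)) = 0 := by
      have e : ((2:ℤ)^(((⟨(i:ℕ)+1, h⟩ : Fin b)):ℕ)) = 2 * 2^(i:ℕ) := by
        simp [pow_succ]; ring
      simp only [map_sub, map_add, map_mul, map_pow, map_ofNat, phi, aeval_X]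
      rw [e]
      exact cheb _
    rw [this]; exact zero_mem _
  next h =>
    have hi : (i : ℕ) = b - 1 := by omega
    have : phi b (X i ^ 2) = q ((2:ℤ)^(b-1)) := by
      simp only [map_pow, phi, aeval_X, hi]
      exact qval _
    rw [this]; exact Ideal.subset_span rfl

open MvPolynomial in
lemma L_phi_span (b : ℕ) (hM : (1:ℤ) ≤ 2^(b-1)) (x : MvPolynomial (Fin b) ℤ)
    (hx : x ∈ Ideal.span (Set.range (gens b))) : L (2^(b-1)) hM (phi b x) = 0 := by
  have h1 : phi b x ∈ Ideal.span {q ((2:ℤ)^(b-1))} := by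
    have h2 : phi b x ∈ Ideal.map (phi b).toRingHom (Ideal.span (Set.range (gens b))) :=
      Ideal.mem_map_of_mem _ hx
    rw [Ideal.map_span] at h2
    refine Ideal.span_le.2 ?_ h2
    rintro y ⟨p, ⟨i, rfl⟩, rfl⟩
    exact phi_gens b i
  obtain ⟨p, hp⟩ := Ideal.mem_span_singleton.1 h1
  rw [hp, mul_comm, L_mul_q]

lemma sum_range_two_pow (n : ℕ) : ∑ i ∈ Finset.range n, 2^i = 2^n - 1 := by
  induction n with
  | zero => simp
  | succ m ih => rw [Finset.sum_range_succ, ih]; have := Nat.one_le_two_pow (n := m); omega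

lemma sum_pow_lt {b : ℕ} (S : Finset (Fin b)) (c : ℕ) (hS : ∀ x ∈ S, (x:ℕ) < c) :
    ∑ i ∈ S, 2^(i:ℕ) ≤ 2^c - 1 := by
  rw [← sum_range_two_pow]
  rw [show (∑ i ∈ S, 2^(i:ℕ)) = ∑ j ∈ S.image Fin.val, 2^j from
    (Finset.sum_image (by intro x _ y _ h; exact Fin.val_injective h)).symm]
  apply Finset.sum_le_sum_of_subset
  intro j hj
  obtain ⟨x, hx, rfl⟩ := Finset.mem_image.1 hj
  exact Finset.mem_range.2 (hS x hx)

def cf (p : LaurentPolynomial ℤ) : ℤ →₀ ℤ := p.coeff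

noncomputable def F (b : ℕ) (i : Fin b) : LaurentPolynomial ℤ :=
  T (2^(i:ℕ)) + T (-(2^(i:ℕ))) + 1

lemma F_coeff (b : ℕ) (i : Fin b) (p : LaurentPolynomial ℤ) (k : ℤ) :
    cf (F b i * p) k
      = cf p (k - 2^(i:ℕ)) + cf p (k + 2^(i:ℕ))
        + cf p k := by
  have h1 : F b i * p = AddMonoidAlgebra.single ((2:ℤ)^(i:ℕ)) 1 * p
      + AddMonoidAlgebra.single (-(2:ℤ)^(i:ℕ)) 1 * p
      + AddMonoidAlgebra.single (0:ℤ) 1 * p := by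
    rw [F, add_mul, add_mul]
    rfl
  rw [h1]
  show (AddMonoidAlgebra.coeff (_ + _ + _ : LaurentPolynomial ℤ)) k = p.coeff (k - 2^(i:ℕ)) + p.coeff (k + 2^(i:ℕ)) + p.coeff k
  rw [AddMonoidAlgebra.coeff_add, AddMonoidAlgebra.coeff_add, Finsupp.add_apply, Finsupp.add_apply,
    AddMonoidAlgebra.coeff_single_mul_apply, AddMonoidAlgebra.coeff_single_mul_apply,
    AddMonoidAlgebra.coeff_single_mul_apply]
  simp only [one_mul]
  ring_nf

lemma prod_coeff (b : ℕ) (S : Finset (Fin b)) :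
    (∀ k : ℤ, cf (∏ i ∈ S, F b i) k ≠ 0 → k.natAbs ≤ ∑ i ∈ S, 2^(i:ℕ))
    ∧ cf (∏ i ∈ S, F b i) 0 = 1 := by
  induction S using Finset.induction_on_max with
  | empty =>
    constructor
    · intro k hk
      simp only [Finset.prod_empty] at hk
      rw [show cf (1 : LaurentPolynomial ℤ) = Finsupp.single 0 1 from rfl,
        Finsupp.single_apply] at hk
      by_contra
      simp only [Finset.sum_empty, Nat.le_zero] at *
      have hk0 : k ≠ 0 := by omega
      rw [if_neg (show ¬(0 = k) from fun h => hk0 h.symm)] at hk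
      exact hk rfl
    · simp only [Finset.prod_empty]
      show (Finsupp.single (0:ℤ) (1:ℤ)) 0 = 1
      exact Finsupp.single_eq_same
  | insert a S hlt ih =>
    have hna : a ∉ S := fun h => lt_irrefl a (hlt a h)
    rw [Finset.prod_insert hna, Finset.sum_insert hna]
    have hbound : ∑ i ∈ S, 2^(i:ℕ) ≤ 2^(a:ℕ) - 1 :=
      sum_pow_lt S (a:ℕ) (fun x hx => Fin.lt_iff_val_lt_val.1 (hlt x hx))
    have h2 : (1:ℕ) ≤ 2^(a:ℕ) := Nat.one_le_two_pow
    constructor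
    · intro k hk
      rw [F_coeff] at hk
      have t1 : ∀ j : ℤ, cf (∏ i ∈ S, F b i) j ≠ 0 → j.natAbs ≤ ∑ i ∈ S, 2^(i:ℕ) := ih.1
      by_contra hcon
      push_neg at hcon
      have e1 : cf (∏ i ∈ S, F b i) (k - 2^(a:ℕ)) = 0 := by
        by_contra h; have := t1 _ h
        have hc : ((2:ℤ)^(a:ℕ)) = ((2^(a:ℕ) : ℕ) : ℤ) := by push_cast; ring
        omega
      have e2 : cf (∏ i ∈ S, F b i) (k + 2^(a:ℕ)) = 0 := by
        by_contra h; have := t1 _ h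
        have hc : ((2:ℤ)^(a:ℕ)) = ((2^(a:ℕ) : ℕ) : ℤ) := by push_cast; ring
        omega
      have e3 : cf (∏ i ∈ S, F b i) k = 0 := by
        by_contra h; have := t1 _ h
        omega
      rw [e1, e2, e3] at hk
      simp at hk
    · rw [F_coeff]
      have e1 : cf (∏ i ∈ S, F b i) ((0:ℤ) - 2^(a:ℕ)) = 0 := by
        by_contra h; have := ih.1 _ h
        have hc : ((2:ℤ)^(a:ℕ)) = ((2^(a:ℕ) : ℕ) : ℤ) := by push_cast; ring
        omega
      have e2 : cf (∏ i ∈ S, F b i) ((0:ℤ) + 2^(a:ℕ)) = 0 := by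
        by_contra h; have := ih.1 _ h
        have hc : ((2:ℤ)^(a:ℕ)) = ((2^(a:ℕ) : ℕ) : ℤ) := by push_cast; ring
        omega
      rw [e1, e2, ih.2]
      norm_num

lemma cast_pow_sub_one (b : ℕ) (hb : 1 ≤ b) :
    ((2:ℤ)^(b-1)) * 2 = 2^b := by
  conv_rhs => rw [show b = (b-1)+1 by omega]
  rw [pow_succ]

lemma L_prod (b : ℕ) (hb : 1 ≤ b) (hM : (1:ℤ) ≤ 2^(b-1)) (S : Finset (Fin b)) :
    L (2^(b-1)) hM (∏ i ∈ S, F b i) = 1 := by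
  have hc : ∑ i ∈ S, 2^(i:ℕ) ≤ 2^b - 1 := sum_pow_lt S b (fun x _ => x.isLt)
  have key : ∀ k : ℤ, cf (∏ i ∈ S, F b i) k ≠ 0 →
      -(2*(2:ℤ)^(b-1)) ≤ k ∧ k < 2*(2:ℤ)^(b-1) := by
    intro k hk
    have h1 := (prod_coeff b S).1 k hk
    have h2 : ((2^b - 1 : ℕ) : ℤ) = 2^(b-1) * 2 - 1 := by
      rw [cast_pow_sub_one b hb]; push_cast [Nat.one_le_two_pow]; omega
    omega
  show Finsupp.linearCombination ℤ (cc (2^(b-1)) hM) (cf (∏ i ∈ S, F b i)) = 1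
  rw [Finsupp.linearCombination_apply, Finsupp.sum]
  rw [Finset.sum_eq_single (0:ℤ)]
  · rw [(prod_coeff b S).2, cc_base _ _ _ (by omega) (by omega), if_pos rfl]
    simp
  · intro k hk hk0
    have hb := key k (Finsupp.mem_support_iff.1 hk)
    rw [cc_base _ _ _ (by omega) (by omega), if_neg hk0]
    simp
  · intro h
    rw [Finsupp.notMem_support_iff.1 h]
    simp

open MvPolynomial in
lemma L_phi_ml (b : ℕ) (hb : 1 ≤ b) (hM : (1:ℤ) ≤ 2^(b-1)) (g : MvPolynomial (Fin b) ℤ)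
    (hml : ∀ m ∈ g.support, ∀ i : Fin b, m i ≤ 1) :
    L (2^(b-1)) hM (phi b g) = eval (fun _ => (1:ℤ)) g := by
  conv_lhs => rw [g.as_sum]
  rw [map_sum, map_sum]
  rw [show eval (fun _ => (1:ℤ)) g = ∑ m ∈ g.support, coeff m g by
    conv_lhs => rw [g.as_sum]
    rw [map_sum]
    exact Finset.sum_congr rfl fun m _ => by simp [eval_monomial, Finsupp.prod]]
  refine Finset.sum_congr rfl fun m hm => ?_
  have hphi : phi b (monomial m (coeff m g)) = (coeff m g) • ∏ i ∈ m.support, F b i := by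
    rw [phi, aeval_monomial, Finsupp.prod]
    have : ∀ i ∈ m.support, (fun i : Fin b => T ((2:ℤ)^(i:ℕ)) + T (-(2:ℤ)^(i:ℕ)) + 1) i ^ m i
        = F b i := by
      intro i hi
      have h1 : m i = 1 := le_antisymm (hml m hm i) (Nat.one_le_iff_ne_zero.2 (Finsupp.mem_support_iff.1 hi))
      rw [h1, pow_one, F]
    rw [Finset.prod_congr rfl this]
    rw [Algebra.smul_def]
  rw [hphi, map_smul, L_prod b hb hM, smul_eq_mul, mul_one]

lemma C_int (z : ℤ) : (LaurentPolynomial.C z : LaurentPolynomial ℤ) = (z : LaurentPolynomial ℤ) :=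
  eq_intCast (LaurentPolynomial.C : ℤ →+* LaurentPolynomial ℤ) z

lemma L_int_T (M : ℤ) (hM : 1 ≤ M) (z m : ℤ) :
    L M hM ((z : LaurentPolynomial ℤ) * T m) = z * cc M hM m := by
  rw [← C_int, ← single_eq_C_mul_T]
  exact L_single M hM m z

open Finset in
lemma L_phi_pow (b : ℕ) (hb : 1 ≤ b) (hM : (1:ℤ) ≤ 2^(b-1)) (n : ℕ)
    (hn : (n:ℤ) < 2^(b-1)) (t : ℤ) (i0 : Fin b) (hi0 : (i0:ℕ) = 0) :
    L (2^(b-1)) hM (phi b ((MvPolynomial.C t + 1 + MvPolynomial.X i0) ^ n))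
      = ∑ k ∈ range (n + 1), (n.choose k : ℤ) * t ^ (n - k) * ((2 * k).choose k : ℤ) := by
  have hphiX : phi b (MvPolynomial.X i0) = T 1 + T (-1) + 1 := by
    rw [phi, MvPolynomial.aeval_X, hi0]
    norm_num
  have hphiC : phi b (MvPolynomial.C t) = (t : LaurentPolynomial ℤ) := by
    rw [phi, MvPolynomial.aeval_C]
    simp
  have hbase : phi b ((MvPolynomial.C t + 1 + MvPolynomial.X i0) ^ n)
      = ((1 + T 1)^2 * T (-1) + (t : LaurentPolynomial ℤ)) ^ n := by
    rw [map_pow, map_add, map_add, hphiX, hphiC, map_one]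
    congr 1
    have h1 : (T 1 * T (-1) : LaurentPolynomial ℤ) = 1 := T_mul_T_neg 1
    linear_combination (-(2:LaurentPolynomial ℤ) - T 1) * h1
  rw [hbase, add_pow, map_sum]
  refine Finset.sum_congr rfl fun k hk => ?_
  have hkn : k ≤ n := by simpa using Nat.lt_succ_iff.1 (mem_range.1 hk)
  have hterm : (1 + T 1 : LaurentPolynomial ℤ)^(2*k)
      = ∑ j ∈ range (2*k + 1), (((2*k).choose j : ℤ) : LaurentPolynomial ℤ) * T (j : ℤ) := by
    rw [add_comm (1 : LaurentPolynomial ℤ) (T 1), add_pow]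
    refine Finset.sum_congr rfl fun j hj => ?_
    rw [T_pow, one_pow, mul_one]
    push_cast
    ring
  have hXk : ((1 + T 1 : LaurentPolynomial ℤ)^2 * T (-1))^k
      = (1 + T 1)^(2*k) * T (-(k:ℤ)) := by
    rw [mul_pow, ← pow_mul, T_pow]
    norm_num
  rw [hXk, hterm, Finset.sum_mul, Finset.sum_mul, Finset.sum_mul, map_sum]
  have hstep : ∀ j ∈ range (2*k + 1),
      L (2^(b-1)) hM ((((2*k).choose j : ℤ) : LaurentPolynomial ℤ) * T (j:ℤ) * T (-(k:ℤ))
          * (t : LaurentPolynomial ℤ)^(n-k) * ((n.choose k : ℕ) : LaurentPolynomial ℤ))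
        = (((2*k).choose j : ℤ) * t^(n-k) * (n.choose k : ℤ))
            * cc (2^(b-1)) hM ((j:ℤ) - (k:ℤ)) := by
    intro j hj
    have hre : (((2*k).choose j : ℤ) : LaurentPolynomial ℤ) * T (j:ℤ) * T (-(k:ℤ))
          * (t : LaurentPolynomial ℤ)^(n-k) * ((n.choose k : ℕ) : LaurentPolynomial ℤ)
        = ((((2*k).choose j : ℤ) * t^(n-k) * (n.choose k : ℤ) : ℤ) : LaurentPolynomial ℤ)
            * T ((j:ℤ) - (k:ℤ)) := by
      rw [T_sub]
      push_cast
      ring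
    rw [hre, L_int_T]
  rw [Finset.sum_congr rfl hstep]
  rw [Finset.sum_eq_single k]
  · have hc : cc (2^(b-1)) hM ((k:ℤ) - (k:ℤ)) = 1 := by
      rw [sub_self, cc_base _ _ _ (by omega) (by omega), if_pos rfl]
    rw [hc, mul_one]
    ring
  · intro j hj hjk
    have hj2 : j ≤ 2*k := by simpa using Nat.lt_succ_iff.1 (mem_range.1 hj)
    have hc : cc (2^(b-1)) hM ((j:ℤ) - (k:ℤ)) = 0 := by
      rw [cc_base _ _ _ (by omega) (by omega), if_neg (by
        intro h
        exact hjk (by omega))]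
    rw [hc, mul_zero]
  · intro h
    exact absurd (mem_range.2 (by omega)) h

end Stmt9Aux

theorem stmt9 (n : ℕ) (hn : 1 ≤ n) (b : ℕ) (hb : b = Nat.log 2 n + 2) (t : ℤ)
    (g : MvPolynomial (Fin b) ℤ)
    (hml : ∀ m ∈ g.support, ∀ i : Fin b, m i ≤ 1)
    (hg : (C t + 1 + X (⟨0, by omega⟩ : Fin b)) ^ n - g ∈ Ideal.span (Set.range (gens b))) :
    eval (fun _ : Fin b => (1 : ℤ)) g
      = ∑ k ∈ Finset.range (n + 1),
          (n.choose k : ℤ) * t ^ (n - k) * ((2 * k).choose k : ℤ) := by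
  have hb1 : 1 ≤ b := by omega
  have hM : (1:ℤ) ≤ 2^(b-1) := by have := pow_pos (by norm_num : (0:ℤ) < 2) (b-1); omega
  have hnM : (n:ℤ) < 2^(b-1) := by
    have h1 : n < 2 ^ (Nat.log 2 n + 1) := Nat.lt_pow_succ_log_self (by norm_num) n
    have h2 : b - 1 = Nat.log 2 n + 1 := by omega
    rw [h2]
    exact_mod_cast h1
  have hzero := L_phi_span b hM _ hg
  rw [map_sub, map_sub, sub_eq_zero] at hzero
  rw [← L_phi_ml b hb1 hM g hml, ← hzero]
  exact L_phi_pow b hb1 hM n hnM t ⟨0, by omega⟩ rfl
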